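/- Let X be a finite set of distinct points in ℙ¹ × ℙ¹ over a field k such that no point of X has second coordinate [0:1] (so that y₀ is a non-zero-divisor on S/I_X), with π₁(X) = {A₁, …, A_ℓ} and α_k = α_{A_k}. Then for every integer a ≥ |π₁(X)| − 1, there is an equality of ideals ⟨I_X ∩ ⟨x₀,x₁⟩ᵃ, y₀⟩ = ⋂_{k=1}^{ℓ} ⟨y₀, y₁^{α_k}, L_{A_k}⟩ ∩ ⟨⟨x₀,x₁⟩ᵃ, y₀⟩, where L_{A_k} = a_{k,1}x₀ − a_{k,0}x₁ if A_k = [a_{k,0}:a_{k,1}]. -/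
import Mathlib


open MvPolynomial
open scoped Classical

noncomputable section

/-- `ℙ¹` over `k`, as the projectivization of `k²`. A `Finset` of
`P1 k × P1 k` is a finite set of distinct points in `ℙ¹ × ℙ¹`. -/
abbrev P1 (k : Type) [Field k] := Projectivization k (Fin 2 → k)

variable (k : Type) [Field k]

/-- The linear form `a₁x₀ - a₀x₁` of degree `(1,0)` vanishing at `A = [a₀:a₁]`. -/
def lX (A : P1 k) : MvPolynomial (Fin 4) k :=
  C (A.rep 1) * X 0 - C (A.rep 0) * X 1

/-- The linear form `b₁y₀ - b₀y₁` of degree `(0,1)` vanishing at `B = [b₀:b₁]`. -/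
def lY (B : P1 k) : MvPolynomial (Fin 4) k :=
  C (B.rep 1) * X 2 - C (B.rep 0) * X 3

/-- The defining ideal `I_P = ⟨a₁x₀ - a₀x₁, b₁y₀ - b₀y₁⟩` of a point
`P = [a₀:a₁] × [b₀:b₁]` of `ℙ¹ × ℙ¹`. Here `x₀,x₁,y₀,y₁` are `X 0, X 1, X 2, X 3`. -/
def pointIdeal (P : P1 k × P1 k) : Ideal (MvPolynomial (Fin 4) k) :=
  Ideal.span {lX k P.1, lY k P.2}

/-- The defining ideal `I_X = ⋂_{P ∈ X} I_P` of a finite set of points of `ℙ¹ × ℙ¹`. -/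
def IX (Xs : Finset (P1 k × P1 k)) : Ideal (MvPolynomial (Fin 4) k) :=
  ⨅ P ∈ Xs, pointIdeal k P

/-- The irrelevant ideal `B = ⟨x₀y₀, x₀y₁, x₁y₀, x₁y₁⟩`. -/
def Birr : Ideal (MvPolynomial (Fin 4) k) :=
  Ideal.span {X 0 * X 2, X 0 * X 3, X 1 * X 2, X 1 * X 3}

/-- The ideal `⟨x₀, x₁⟩`. -/
def Mx : Ideal (MvPolynomial (Fin 4) k) := Ideal.span {X 0, X 1}

/-- The bidegree-`(i,j)` component `S_{(i,j)}` of `S = k[x₀,x₁,y₀,y₁]`: the `k`-span of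
monomials of degree `i` in `x₀,x₁` and degree `j` in `y₀,y₁`. -/
def bicomp (i j : ℕ) : Submodule k (MvPolynomial (Fin 4) k) :=
  Submodule.span k {f | ∃ m : Fin 4 →₀ ℕ, m 0 + m 1 = i ∧ m 2 + m 3 = j ∧ f = monomial m 1}

/-- The Hilbert function `H_{S/I}(i,j) = dim_k S_{(i,j)} - dim_k (I ∩ S_{(i,j)})`. -/
def hilb (I : Ideal (MvPolynomial (Fin 4) k)) (i j : ℕ) : ℤ :=
  (Module.finrank k (bicomp k i j) : ℤ) -
    (Module.finrank k
      ((Submodule.restrictScalars k I) ⊓ bicomp k i j : Submodule k (MvPolynomial (Fin 4) k)) : ℤ)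

/-- `π₁(X)`, the set of distinct first coordinates of points of `X`. -/
def pi1 (Xs : Finset (P1 k × P1 k)) : Finset (P1 k) := Xs.image Prod.fst

/-- `α_A`, the number of points of `X` whose first coordinate is `A`. -/
def alphaA (Xs : Finset (P1 k × P1 k)) (A : P1 k) : ℕ :=
  (Xs.filter (fun P => P.1 = A)).card

/-- The point `[0:1]` of `ℙ¹`. -/
def pt01 : P1 k := Projectivization.mk k ![0, 1] (by
  intro h
  have := congrFun h 1
  simp at this)

namespace Stmt12Aux

variable {k}

lemma vec2_cases {v : Fin 2 → k} (hv : v ≠ 0) : v 0 ≠ 0 ∨ v 1 ≠ 0 := by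
  by_contra h
  push_neg at h
  apply hv; funext i; fin_cases i <;> simp [h.1, h.2]

lemma smul_eq_of_det {v w : Fin 2 → k} (hv : v ≠ 0) (hw : w ≠ 0)
    (hdet : w 1 * v 0 - w 0 * v 1 = 0) : ∃ t : k, t ≠ 0 ∧ w = t • v := by
  rcases vec2_cases hv with h0 | h1
  · have hW1 : w 1 = w 0 * v 1 / v 0 := by
      field_simp; linear_combination hdet
    refine ⟨w 0 / v 0, ?_, ?_⟩
    · intro ht
      have hw00 : w 0 = 0 := by
        rcases div_eq_zero_iff.mp ht with h | h
        · exact h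
        · exact absurd h h0
      apply hw; funext i; fin_cases i
      · simpa using hw00
      · simpa using hW1.trans (by rw [hw00]; simp)
    · funext i; fin_cases i
      · show w 0 = w 0 / v 0 * v 0
        field_simp
      · show w 1 = w 0 / v 0 * v 1
        rw [hW1]; ring
  · have hW0 : w 0 = w 1 * v 0 / v 1 := by
      field_simp; linear_combination -hdet
    refine ⟨w 1 / v 1, ?_, ?_⟩
    · intro ht
      have hw10 : w 1 = 0 := by
        rcases div_eq_zero_iff.mp ht with h | h
        · exact h
        · exact absurd h h1
      apply hw; funext i; fin_cases i
      · simpa using hW0.trans (by rw [hw10]; simp)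
      · simpa using hw10
    · funext i; fin_cases i
      · show w 0 = w 1 / v 1 * v 0
        rw [hW0]; ring
      · show w 1 = w 1 / v 1 * v 1
        field_simp

lemma eq_of_det {A A' : P1 k}
    (hdet : A'.rep 1 * A.rep 0 - A'.rep 0 * A.rep 1 = 0) : A' = A := by
  obtain ⟨t, ht, htw⟩ := smul_eq_of_det A.rep_nonzero A'.rep_nonzero hdet
  have : Projectivization.mk k A'.rep A'.rep_nonzero
      = Projectivization.mk k A.rep A.rep_nonzero := by
    rw [Projectivization.mk_eq_mk_iff]
    exact ⟨Units.mk0 t ht, by funext i; rw [htw]; simp [Units.smul_def]⟩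
  simpa [Projectivization.mk_rep] using this

lemma det_ne_zero_of_ne {A A' : P1 k} (h : A' ≠ A) :
    A'.rep 1 * A.rep 0 - A'.rep 0 * A.rep 1 ≠ 0 :=
  fun hdet => h (eq_of_det hdet)

lemma rep0_ne_zero_of_ne_pt01 {B : P1 k} (h : B ≠ pt01 k) : B.rep 0 ≠ 0 := by
  intro h0
  apply h
  have h1 : B.rep 1 ≠ 0 := by
    rcases vec2_cases B.rep_nonzero with h' | h'
    · exact absurd h0 h'
    · exact h'
  have hne : (![0, 1] : Fin 2 → k) ≠ 0 := by
    intro hh; have := congrFun hh 1; simp at this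
  have : Projectivization.mk k B.rep B.rep_nonzero = Projectivization.mk k ![0,1] hne := by
    rw [Projectivization.mk_eq_mk_iff]
    refine ⟨Units.mk0 (B.rep 1) h1, ?_⟩
    funext i; fin_cases i <;> simp [Units.smul_def, h0]
  have hB := B.mk_rep
  rw [this] at hB
  rw [← hB]; rfl


local notation "R4" => MvPolynomial (Fin 4) k

lemma sub_retract_mem (ρ : R4 →ₐ[k] R4) (I : Ideal R4)
    (h : ∀ i, X i - ρ (X i) ∈ I) (f : R4) : f - ρ f ∈ I := by
  induction f using MvPolynomial.induction_on with
  | C a =>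
      rw [algHom_C]
      simp [MvPolynomial.algebraMap_eq]
  | add p q hp hq =>
      have := I.add_mem hp hq
      simpa [map_add, add_sub_add_comm] using this
  | mul_X p n hp =>
      rw [map_mul]
      have heq : p * X n - ρ p * ρ (X n) = (p - ρ p) * X n + ρ p * (X n - ρ (X n)) := by ring
      rw [heq]
      exact I.add_mem (I.mul_mem_right _ hp) (I.mul_mem_left _ (h n))

def psiP (v w : Fin 2 → k) : R4 →ₐ[k] R4 :=
  aeval ![C (v 0) * X 0, C (v 1) * X 0, C (w 0) * X 2, C (w 1) * X 2]

lemma ker_psiP {v w : Fin 2 → k} (hv : v ≠ 0) (hw : w ≠ 0) :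
    RingHom.ker (psiP (k := k) v w) =
      Ideal.span {C (v 1) * X 0 - C (v 0) * X 1, C (w 1) * X 2 - C (w 0) * X 3} := by
  set g1 : R4 := C (v 1) * X 0 - C (v 0) * X 1 with hg1def
  set g2 : R4 := C (w 1) * X 2 - C (w 0) * X 3 with hg2def
  set I : Ideal R4 := Ideal.span {g1, g2} with hIdef
  have hg1 : g1 ∈ I := Ideal.subset_span (by left; rfl)
  have hg2 : g2 ∈ I := Ideal.subset_span (by right; rfl)
  apply le_antisymm
  · set τ : R4 →ₐ[k] R4 := aeval ![if v 0 = 0 then C (v 1)⁻¹ * X 1 else C (v 0)⁻¹ * X 0, 0,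
      if w 0 = 0 then C (w 1)⁻¹ * X 3 else C (w 0)⁻¹ * X 2, 0] with hτdef
    set ρ : R4 →ₐ[k] R4 := τ.comp (psiP v w) with hρdef
    have hgen : ∀ i, X i - ρ (X i) ∈ I := by
      intro i
      fin_cases i
      · show X 0 - ρ (X 0) ∈ I
        have : ρ (X 0) = C (v 0) * (if v 0 = 0 then C (v 1)⁻¹ * X 1 else C (v 0)⁻¹ * X 0) := by
          simp [hρdef, psiP, hτdef]
        rw [this]
        by_cases h0 : v 0 = 0
        · have h1 : v 1 ≠ 0 := by
            rcases vec2_cases hv with h | h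
            · exact absurd h0 h
            · exact h
          rw [if_pos h0, h0, C_0, zero_mul, sub_zero]
          have : (X 0 : R4) = C (v 1)⁻¹ * g1 := by
            rw [hg1def, h0, C_0, zero_mul, sub_zero, ← mul_assoc, ← C_mul,
              inv_mul_cancel₀ h1, C_1, one_mul]
          rw [this]; exact I.mul_mem_left _ hg1
        · rw [if_neg h0, ← mul_assoc, ← C_mul, mul_inv_cancel₀ h0, C_1, one_mul, sub_self]
          exact I.zero_mem
      · show X 1 - ρ (X 1) ∈ I
        have : ρ (X 1) = C (v 1) * (if v 0 = 0 then C (v 1)⁻¹ * X 1 else C (v 0)⁻¹ * X 0) := by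
          simp [hρdef, psiP, hτdef]
        rw [this]
        by_cases h0 : v 0 = 0
        · have h1 : v 1 ≠ 0 := by
            rcases vec2_cases hv with h | h
            · exact absurd h0 h
            · exact h
          rw [if_pos h0, ← mul_assoc, ← C_mul, mul_inv_cancel₀ h1, C_1, one_mul, sub_self]
          exact I.zero_mem
        · rw [if_neg h0]
          have hc : C (v 0)⁻¹ * C (v 0) = (1 : R4) := by
            rw [← C_mul, inv_mul_cancel₀ h0, C_1]
          have heq : X 1 - C (v 1) * (C (v 0)⁻¹ * X 0) = (-(C (v 0)⁻¹)) * g1 := by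
            rw [hg1def]; linear_combination (-(X 1) : R4) * hc
          rw [heq]; exact I.mul_mem_left _ hg1
      · show X 2 - ρ (X 2) ∈ I
        have : ρ (X 2) = C (w 0) * (if w 0 = 0 then C (w 1)⁻¹ * X 3 else C (w 0)⁻¹ * X 2) := by
          simp [hρdef, psiP, hτdef]
        rw [this]
        by_cases h0 : w 0 = 0
        · have h1 : w 1 ≠ 0 := by
            rcases vec2_cases hw with h | h
            · exact absurd h0 h
            · exact h
          rw [if_pos h0, h0, C_0, zero_mul, sub_zero]
          have : (X 2 : R4) = C (w 1)⁻¹ * g2 := by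
            rw [hg2def, h0, C_0, zero_mul, sub_zero, ← mul_assoc, ← C_mul,
              inv_mul_cancel₀ h1, C_1, one_mul]
          rw [this]; exact I.mul_mem_left _ hg2
        · rw [if_neg h0, ← mul_assoc, ← C_mul, mul_inv_cancel₀ h0, C_1, one_mul, sub_self]
          exact I.zero_mem
      · show X 3 - ρ (X 3) ∈ I
        have : ρ (X 3) = C (w 1) * (if w 0 = 0 then C (w 1)⁻¹ * X 3 else C (w 0)⁻¹ * X 2) := by
          simp [hρdef, psiP, hτdef]
        rw [this]
        by_cases h0 : w 0 = 0
        · have h1 : w 1 ≠ 0 := by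
            rcases vec2_cases hw with h | h
            · exact absurd h0 h
            · exact h
          rw [if_pos h0, ← mul_assoc, ← C_mul, mul_inv_cancel₀ h1, C_1, one_mul, sub_self]
          exact I.zero_mem
        · rw [if_neg h0]
          have hc : C (w 0)⁻¹ * C (w 0) = (1 : R4) := by
            rw [← C_mul, inv_mul_cancel₀ h0, C_1]
          have heq : X 3 - C (w 1) * (C (w 0)⁻¹ * X 2) = (-(C (w 0)⁻¹)) * g2 := by
            rw [hg2def]; linear_combination (-(X 3) : R4) * hc
          rw [heq]; exact I.mul_mem_left _ hg2
    intro f hf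
    rw [RingHom.mem_ker] at hf
    have hsub := sub_retract_mem ρ I hgen f
    rw [hρdef] at hsub
    rw [AlgHom.comp_apply, hf, map_zero, sub_zero] at hsub
    exact hsub
  · rw [Ideal.span_le]
    rintro x (rfl | rfl)
    · rw [SetLike.mem_coe, RingHom.mem_ker]
      simp [psiP, hg1def]
      ring
    · rw [SetLike.mem_coe, RingHom.mem_ker]
      simp [psiP, hg2def]
      ring

def psiL (v : Fin 2 → k) : R4 →ₐ[k] R4 :=
  aeval ![C (v 0) * X 0, C (v 1) * X 0, X 2, X 3]

lemma ker_psiL {v : Fin 2 → k} (hv : v ≠ 0) :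
    RingHom.ker (psiL (k := k) v) = Ideal.span {C (v 1) * X 0 - C (v 0) * X 1} := by
  set g1 : R4 := C (v 1) * X 0 - C (v 0) * X 1 with hg1def
  set I : Ideal R4 := Ideal.span {g1} with hIdef
  have hg1 : g1 ∈ I := Ideal.subset_span rfl
  apply le_antisymm
  · set τ : R4 →ₐ[k] R4 := aeval ![if v 0 = 0 then C (v 1)⁻¹ * X 1 else C (v 0)⁻¹ * X 0, 0,
      X 2, X 3] with hτdef
    set ρ : R4 →ₐ[k] R4 := τ.comp (psiL v) with hρdef
    have hgen : ∀ i, X i - ρ (X i) ∈ I := by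
      intro i
      fin_cases i
      · show X 0 - ρ (X 0) ∈ I
        have : ρ (X 0) = C (v 0) * (if v 0 = 0 then C (v 1)⁻¹ * X 1 else C (v 0)⁻¹ * X 0) := by
          simp [hρdef, psiL, hτdef]
        rw [this]
        by_cases h0 : v 0 = 0
        · have h1 : v 1 ≠ 0 := by
            rcases vec2_cases hv with h | h
            · exact absurd h0 h
            · exact h
          rw [if_pos h0, h0, C_0, zero_mul, sub_zero]
          have : (X 0 : R4) = C (v 1)⁻¹ * g1 := by
            rw [hg1def, h0, C_0, zero_mul, sub_zero, ← mul_assoc, ← C_mul,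
              inv_mul_cancel₀ h1, C_1, one_mul]
          rw [this]; exact I.mul_mem_left _ hg1
        · rw [if_neg h0, ← mul_assoc, ← C_mul, mul_inv_cancel₀ h0, C_1, one_mul, sub_self]
          exact I.zero_mem
      · show X 1 - ρ (X 1) ∈ I
        have : ρ (X 1) = C (v 1) * (if v 0 = 0 then C (v 1)⁻¹ * X 1 else C (v 0)⁻¹ * X 0) := by
          simp [hρdef, psiL, hτdef]
        rw [this]
        by_cases h0 : v 0 = 0
        · have h1 : v 1 ≠ 0 := by
            rcases vec2_cases hv with h | h
            · exact absurd h0 h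
            · exact h
          rw [if_pos h0, ← mul_assoc, ← C_mul, mul_inv_cancel₀ h1, C_1, one_mul, sub_self]
          exact I.zero_mem
        · rw [if_neg h0]
          have hc : C (v 0)⁻¹ * C (v 0) = (1 : R4) := by
            rw [← C_mul, inv_mul_cancel₀ h0, C_1]
          have heq : X 1 - C (v 1) * (C (v 0)⁻¹ * X 0) = (-(C (v 0)⁻¹)) * g1 := by
            rw [hg1def]; linear_combination (-(X 1) : R4) * hc
          rw [heq]; exact I.mul_mem_left _ hg1
      · show X 2 - ρ (X 2) ∈ I
        have : ρ (X 2) = X 2 := by simp [hρdef, psiL, hτdef]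
        rw [this, sub_self]; exact I.zero_mem
      · show X 3 - ρ (X 3) ∈ I
        have : ρ (X 3) = X 3 := by simp [hρdef, psiL, hτdef]
        rw [this, sub_self]; exact I.zero_mem
    intro f hf
    rw [RingHom.mem_ker] at hf
    have hsub := sub_retract_mem ρ I hgen f
    rw [hρdef] at hsub
    rw [AlgHom.comp_apply, hf, map_zero, sub_zero] at hsub
    exact hsub
  · rw [Ideal.span_le]
    rintro x rfl
    rw [SetLike.mem_coe, RingHom.mem_ker, hg1def, map_sub, map_mul, map_mul]
    have h0 : psiL (k := k) v (X 0) = C (v 0) * X 0 := by simp [psiL]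
    have h1 : psiL (k := k) v (X 1) = C (v 1) * X 0 := by simp [psiL]
    have hC : ∀ r : k, psiL (k := k) v (C r) = C r := by intro r; simp [psiL, algebraMap_eq]
    rw [h0, h1, hC, hC]
    ring

lemma psiP_lY (v w : Fin 2 → k) (B : P1 k) :
    psiP (k := k) v w (lY k B) = C (B.rep 1 * w 0 - B.rep 0 * w 1) * X 2 := by
  simp [psiP, lY]
  ring

lemma psiL_lX (v : Fin 2 → k) (A : P1 k) :
    psiL (k := k) v (lX k A) = C (A.rep 1 * v 0 - A.rep 0 * v 1) * X 0 := by
  simp [psiL, lX]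
  ring

lemma cancel_lY {P : P1 k × P1 k} {B0 : P1 k} (hB : B0 ≠ P.2) {g : R4}
    (h : lY k B0 * g ∈ pointIdeal k P) : g ∈ pointIdeal k P := by
  have hker : pointIdeal k P = RingHom.ker (psiP (k := k) P.1.rep P.2.rep) := by
    rw [ker_psiP P.1.rep_nonzero P.2.rep_nonzero]
    rfl
  rw [hker] at h ⊢
  rw [RingHom.mem_ker] at h ⊢
  rw [map_mul, psiP_lY] at h
  rcases mul_eq_zero.mp h with h' | h'
  · exfalso
    rcases mul_eq_zero.mp h' with h'' | h''
    · exact det_ne_zero_of_ne hB (by rwa [C_eq_zero] at h'')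
    · exact X_ne_zero _ h''
  · exact h'

lemma cancel_lX {A A' : P1 k} (hA : A' ≠ A) {g : R4}
    (h : lX k A' * g ∈ Ideal.span {lX k A}) : g ∈ Ideal.span {lX k A} := by
  have hker : Ideal.span {lX k A} = RingHom.ker (psiL (k := k) A.rep) := by
    rw [ker_psiL A.rep_nonzero]
    rfl
  rw [hker] at h ⊢
  rw [RingHom.mem_ker] at h ⊢
  rw [map_mul, psiL_lX] at h
  rcases mul_eq_zero.mp h with h' | h'
  · exfalso
    rcases mul_eq_zero.mp h' with h'' | h''
    · exact det_ne_zero_of_ne hA (by rwa [C_eq_zero] at h'')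
    · exact X_ne_zero _ h''
  · exact h'

lemma mem_span_prod_lX (T : Finset (P1 k)) :
    ∀ f : R4, (∀ A ∈ T, f ∈ Ideal.span {lX k A}) → f ∈ Ideal.span {∏ A ∈ T, lX k A} := by
  induction T using Finset.induction_on with
  | empty => intro f h; simp [Ideal.mem_span_singleton]
  | @insert a s ha ih =>
      intro f h
      obtain ⟨g, hg⟩ := Ideal.mem_span_singleton.mp (h a (Finset.mem_insert_self a s))
      have hgs : ∀ A ∈ s, g ∈ Ideal.span {lX k A} := by
        intro A hAs
        apply cancel_lX (A := A) (A' := a) (fun hEq => ha (by rwa [hEq]))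
        rw [← hg]
        exact h A (Finset.mem_insert_of_mem hAs)
      obtain ⟨g', hg'⟩ := Ideal.mem_span_singleton.mp (ih g hgs)
      rw [Ideal.mem_span_singleton, Finset.prod_insert ha]
      exact ⟨g', by rw [hg, hg']; ring⟩

lemma X0_mem_Mx : (X 0 : R4) ∈ Mx k := Ideal.subset_span (by left; rfl)
lemma X1_mem_Mx : (X 1 : R4) ∈ Mx k := Ideal.subset_span (by right; rfl)

lemma lX_mem_Mx (A : P1 k) : lX k A ∈ Mx k := by
  rw [lX]
  exact Submodule.sub_mem _ ((Mx k).mul_mem_left _ X0_mem_Mx) ((Mx k).mul_mem_left _ X1_mem_Mx)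

lemma mem_Mx_support {f : R4} (hf : f ∈ Mx k) : ∀ m ∈ f.support, 1 ≤ m 0 + m 1 := by
  obtain ⟨p, q, hpq⟩ := Ideal.mem_span_pair.mp hf
  intro m hm
  rw [← hpq] at hm
  rcases Finset.mem_union.mp (MvPolynomial.support_add hm) with hm' | hm' <;>
  · obtain ⟨b, hb, c, hc, hbc⟩ := Finset.mem_add.mp (MvPolynomial.support_mul _ _ hm')
    rw [MvPolynomial.support_X, Finset.mem_singleton] at hc
    subst hc
    rw [← hbc]
    simp [Finsupp.add_apply, Finsupp.single_apply]
    omega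

lemma mem_Mx_pow_support {c : ℕ} {f : R4} (hf : f ∈ (Mx k) ^ c) :
    ∀ m ∈ f.support, c ≤ m 0 + m 1 := by
  induction c generalizing f with
  | zero => intro m _; exact Nat.zero_le _
  | succ c ih =>
      rw [pow_succ] at hf
      refine Submodule.mul_induction_on hf ?_ ?_
      · intro p hp q hq m hm
        obtain ⟨b, hb, c', hc', hbc⟩ := Finset.mem_add.mp (MvPolynomial.support_mul _ _ hm)
        rw [← hbc]
        have h1 := ih hp b hb
        have h2 := mem_Mx_support hq c' hc'
        simp only [Finsupp.add_apply]
        omega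
      · intro x y hx hy m hm
        rcases Finset.mem_union.mp (MvPolynomial.support_add hm) with hm' | hm'
        · exact hx m hm'
        · exact hy m hm'

lemma monomial_split {m : Fin 4 →₀ ℕ} (r : k) {i j : ℕ} (hi : i ≤ m 0) (hj : j ≤ m 1) :
    monomial m r = (X 0 ^ i * X 1 ^ j) *
      monomial (m - Finsupp.single 0 i - Finsupp.single 1 j) r := by
  rw [X_pow_eq_monomial, X_pow_eq_monomial, monomial_mul, monomial_mul, one_mul, one_mul]
  have hle : Finsupp.single (0 : Fin 4) i + Finsupp.single 1 j ≤ m := by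
    rw [Finsupp.le_def]
    intro q
    by_cases hq0 : q = 0
    · subst hq0
      simp [Finsupp.add_apply, Finsupp.single_apply]
      omega
    · by_cases hq1 : q = 1
      · subst hq1
        simp [Finsupp.add_apply, Finsupp.single_apply]
        omega
      · simp [Finsupp.add_apply, Finsupp.single_apply, Ne.symm hq0, Ne.symm hq1]
  rw [tsub_tsub, add_tsub_cancel_of_le hle]

lemma monomial_mem_Mx_pow {m : Fin 4 →₀ ℕ} (r : k) {c : ℕ} (hc : c ≤ m 0 + m 1) :
    (monomial m r : R4) ∈ (Mx k) ^ c := by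
  rw [monomial_split r (le_refl (m 0)) (le_refl (m 1))]
  apply Ideal.pow_le_pow_right hc
  have hx : (X 0 ^ (m 0) * X 1 ^ (m 1) : R4) ∈ (Mx k) ^ (m 0 + m 1) := by
    rw [pow_add]
    exact Ideal.mul_mem_mul (Ideal.pow_mem_pow X0_mem_Mx _) (Ideal.pow_mem_pow X1_mem_Mx _)
  exact Ideal.mul_mem_right _ _ hx

lemma mem_Mx_pow_iff {c : ℕ} {f : R4} :
    f ∈ (Mx k) ^ c ↔ ∀ m ∈ f.support, c ≤ m 0 + m 1 := by
  constructor
  · exact mem_Mx_pow_support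
  · intro h
    rw [← MvPolynomial.support_sum_monomial_coeff f]
    exact Ideal.sum_mem _ (fun m hm => monomial_mem_Mx_pow _ (h m hm))

lemma Mx_pow_eq_span (c : ℕ) :
    (Mx k) ^ c = Ideal.span {f : R4 | ∃ i j, i + j = c ∧ f = X 0 ^ i * X 1 ^ j} := by
  apply le_antisymm
  · intro f hf
    have hsupp := mem_Mx_pow_support hf
    rw [← MvPolynomial.support_sum_monomial_coeff f]
    refine Ideal.sum_mem _ (fun m hm => ?_)
    have hcm := hsupp m hm
    have hi : min (m 0) c ≤ m 0 := Nat.min_le_left _ _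
    have hj : c - min (m 0) c ≤ m 1 := by omega
    rw [monomial_split (coeff m f) hi hj]
    exact Ideal.mul_mem_right _ _
      (Ideal.subset_span ⟨min (m 0) c, c - min (m 0) c, by omega, rfl⟩)
  · rw [Ideal.span_le]
    rintro x ⟨i, j, hij, rfl⟩
    rw [SetLike.mem_coe, ← hij, pow_add]
    exact Ideal.mul_mem_mul (Ideal.pow_mem_pow X0_mem_Mx _) (Ideal.pow_mem_pow X1_mem_Mx _)

lemma divX_Mx {n : Fin 4} {g : R4} {c c' : ℕ}
    (hc : ∀ m : Fin 4 →₀ ℕ,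
      c ≤ (Finsupp.single n 1 + m : Fin 4 →₀ ℕ) 0 + (Finsupp.single n 1 + m : Fin 4 →₀ ℕ) 1 →
      c' ≤ m 0 + m 1)
    (h : X n * g ∈ (Mx k) ^ c) : g ∈ (Mx k) ^ c' := by
  rw [mem_Mx_pow_iff] at h ⊢
  intro m hm
  apply hc
  apply h
  rw [MvPolynomial.mem_support_iff, MvPolynomial.coeff_X_mul]
  exact MvPolynomial.mem_support_iff.mp hm

lemma divL_Mx (A : P1 k) {c : ℕ} {g : R4}
    (h : lX k A * g ∈ (Mx k) ^ c) : g ∈ (Mx k) ^ (c - 1) := by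
  rw [lX] at h
  by_cases h0 : A.rep 0 = 0
  · have h1 : A.rep 1 ≠ 0 := by
      rcases vec2_cases A.rep_nonzero with h' | h'
      · exact absurd h0 h'
      · exact h'
    rw [h0, C_0, zero_mul, sub_zero] at h
    have hX0g : X 0 * g ∈ (Mx k) ^ c := by
      have : X 0 * g = C (A.rep 1)⁻¹ * (C (A.rep 1) * X 0 * g) := by
        rw [← mul_assoc, ← mul_assoc, ← C_mul, inv_mul_cancel₀ h1, C_1, one_mul]
      rw [this]
      exact Ideal.mul_mem_left _ _ h
    refine divX_Mx (fun m hm => ?_) hX0g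
    simp [Finsupp.add_apply, Finsupp.single_apply] at hm
    omega
  · set v0 := A.rep 0 with hv0
    set v1 := A.rep 1 with hv1
    set Θ : R4 →ₐ[k] R4 := aeval ![X 0, C (v1 / v0) * X 0 - C v0⁻¹ * X 1, X 2, X 3] with hΘ
    set Θ' : R4 →ₐ[k] R4 := aeval ![X 0, C v1 * X 0 - C v0 * X 1, X 2, X 3] with hΘ'
    have e1 : C v0 * C (v1 / v0) = (C v1 : R4) := by
      rw [← C_mul]; congr 1; field_simp
    have e2 : C v0 * C v0⁻¹ = (1 : R4) := by
      rw [← C_mul, mul_inv_cancel₀ h0, C_1]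
    have e3 : C v0⁻¹ * C v0 = (1 : R4) := by
      rw [← C_mul, inv_mul_cancel₀ h0, C_1]
    have e4 : (C (v1 / v0) : R4) = C v0⁻¹ * C v1 := by
      rw [← C_mul]; congr 1; field_simp
    have hΘL : Θ (C v1 * X 0 - C v0 * X 1) = X 1 := by
      rw [map_sub, map_mul, map_mul]
      have c1 : Θ (C v1) = C v1 := by simp [hΘ, algebraMap_eq]
      have c2 : Θ (C v0) = C v0 := by simp [hΘ, algebraMap_eq]
      have x0 : Θ (X 0) = X 0 := by simp [hΘ]
      have x1 : Θ (X 1) = C (v1 / v0) * X 0 - C v0⁻¹ * X 1 := by simp [hΘ]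
      rw [c1, c2, x0, x1]
      linear_combination (-(X 0) : R4) * e1 + (X 1 : R4) * e2
    have hcomp : ∀ f : R4, Θ' (Θ f) = f := by
      have hid : Θ'.comp Θ = AlgHom.id k R4 := by
        apply MvPolynomial.algHom_ext
        intro i
        fin_cases i
        · simp [hΘ, hΘ']
        · show Θ' (Θ (X 1)) = X 1
          have x1 : Θ (X 1) = C (v1 / v0) * X 0 - C v0⁻¹ * X 1 := by simp [hΘ]
          rw [x1, map_sub, map_mul, map_mul]
          have c1 : Θ' (C (v1 / v0)) = C (v1 / v0) := by simp [hΘ', algebraMap_eq]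
          have c2 : Θ' (C v0⁻¹) = C v0⁻¹ := by simp [hΘ', algebraMap_eq]
          have x0 : Θ' (X 0) = X 0 := by simp [hΘ']
          have x1' : Θ' (X 1) = C v1 * X 0 - C v0 * X 1 := by simp [hΘ']
          rw [c1, c2, x0, x1']
          linear_combination (X 0 : R4) * e4 + (X 1 : R4) * e3
        · simp [hΘ, hΘ']
        · simp [hΘ, hΘ']
      intro f
      have := congrArg (fun φ : R4 →ₐ[k] R4 => φ f) hid
      simpa using this
    have hmapMx : ∀ (Φ : R4 →ₐ[k] R4), Φ (X 0) ∈ Mx k → Φ (X 1) ∈ Mx k →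
        (X 0 : R4) ∈ Ideal.map Φ (Mx k) → (X 1 : R4) ∈ Ideal.map Φ (Mx k) →
        Ideal.map Φ (Mx k) = Mx k := by
      intro Φ p0 p1 q0 q1
      apply le_antisymm
      · have : Ideal.map Φ (Ideal.span {(X 0 : R4), X 1}) ≤ Mx k := by
          rw [Ideal.map_span, Ideal.span_le]
          rintro x ⟨y, hy, rfl⟩
          simp only [Set.mem_insert_iff, Set.mem_singleton_iff] at hy
          rcases hy with rfl | rfl
          exacts [p0, p1]
        exact this
      · have : Ideal.span {(X 0 : R4), X 1} ≤ Ideal.map Φ (Mx k) := by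
          rw [Ideal.span_le]
          rintro x (rfl | rfl)
          exacts [q0, q1]
        exact this
    have hΘX1mem : (C (v1 / v0) * X 0 - C v0⁻¹ * X 1 : R4) ∈ Mx k :=
      Submodule.sub_mem _ ((Mx k).mul_mem_left _ X0_mem_Mx) ((Mx k).mul_mem_left _ X1_mem_Mx)
    have hΘ'X1mem : (C v1 * X 0 - C v0 * X 1 : R4) ∈ Mx k :=
      Submodule.sub_mem _ ((Mx k).mul_mem_left _ X0_mem_Mx) ((Mx k).mul_mem_left _ X1_mem_Mx)
    have hmapΘ : Ideal.map Θ (Mx k) = Mx k := by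
      apply hmapMx Θ
      · have : Θ (X 0 : R4) = X 0 := by simp [hΘ]
        rw [this]; exact X0_mem_Mx
      · have : Θ (X 1 : R4) = C (v1 / v0) * X 0 - C v0⁻¹ * X 1 := by simp [hΘ]
        rw [this]; exact hΘX1mem
      · have : Θ (X 0 : R4) = X 0 := by simp [hΘ]
        rw [← this]; exact Ideal.mem_map_of_mem _ X0_mem_Mx
      · rw [← hΘL]; exact Ideal.mem_map_of_mem _ hΘ'X1mem
    have hmapΘ' : Ideal.map Θ' (Mx k) = Mx k := by
      apply hmapMx Θ'
      · have : Θ' (X 0 : R4) = X 0 := by simp [hΘ']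
        rw [this]; exact X0_mem_Mx
      · have : Θ' (X 1 : R4) = C v1 * X 0 - C v0 * X 1 := by simp [hΘ']
        rw [this]; exact hΘ'X1mem
      · have : Θ' (X 0 : R4) = X 0 := by simp [hΘ']
        rw [← this]; exact Ideal.mem_map_of_mem _ X0_mem_Mx
      · have := hcomp (X 1)
        rw [← this]
        apply Ideal.mem_map_of_mem
        have : Θ (X 1) = C (v1 / v0) * X 0 - C v0⁻¹ * X 1 := by simp [hΘ]
        rw [this]; exact hΘX1mem
    have h2 : Θ ((C v1 * X 0 - C v0 * X 1) * g) ∈ Ideal.map Θ ((Mx k) ^ c) :=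
      Ideal.mem_map_of_mem _ h
    rw [Ideal.map_pow, hmapΘ, map_mul, hΘL] at h2
    have h3 : Θ g ∈ (Mx k) ^ (c - 1) := by
      refine divX_Mx (fun m hm => ?_) h2
      simp [Finsupp.add_apply, Finsupp.single_apply] at hm
      omega
    have h4 : Θ' (Θ g) ∈ Ideal.map Θ' ((Mx k) ^ (c - 1)) := Ideal.mem_map_of_mem _ h3
    rw [Ideal.map_pow, hmapΘ', hcomp g] at h4
    exact h4

lemma divProd_Mx (T : Finset (P1 k)) :
    ∀ {c : ℕ} {g : R4}, (∏ A ∈ T, lX k A) * g ∈ (Mx k) ^ c → g ∈ (Mx k) ^ (c - T.card) := by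
  induction T using Finset.induction_on with
  | empty => intro c g h; simpa using h
  | @insert a s ha ih =>
      intro c g h
      rw [Finset.prod_insert ha, mul_assoc] at h
      have h1 : (∏ A ∈ s, lX k A) * g ∈ (Mx k) ^ (c - 1) := divL_Mx a h
      have h2 := ih h1
      rw [Finset.card_insert_of_notMem ha]
      have : c - 1 - s.card = c - (s.card + 1) := by omega
      rwa [this] at h2

lemma prod_lX_mem_Mx_pow (T : Finset (P1 k)) :
    (∏ A ∈ T, lX k A) ∈ (Mx k) ^ T.card := by
  induction T using Finset.induction_on with
  | empty => simp
  | @insert a s ha ih =>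
      rw [Finset.prod_insert ha, Finset.card_insert_of_notMem ha, pow_succ']
      exact Ideal.mul_mem_mul (lX_mem_Mx a) ih


lemma ideal_le_sum {β : Type} (s : Finset β) (J : β → Ideal R4) {b : β} (hb : b ∈ s) :
    J b ≤ ∑ x ∈ s, J x := by
  induction s using Finset.induction_on with
  | empty => simp at hb
  | @insert a t ha ih =>
      rw [Finset.sum_insert ha, Submodule.add_eq_sup]
      rcases Finset.mem_insert.mp hb with rfl | hb'
      · exact le_sup_left
      · exact le_trans (ih hb') le_sup_right

lemma sum_ideal_le {β : Type} (s : Finset β) (J : β → Ideal R4) {K : Ideal R4}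
    (h : ∀ b ∈ s, J b ≤ K) : ∑ x ∈ s, J x ≤ K := by
  induction s using Finset.induction_on with
  | empty => intro x hx; simp at hx; simp [hx]
  | @insert a t ha ih =>
      rw [Finset.sum_insert ha, Submodule.add_eq_sup]
      exact sup_le (h a (Finset.mem_insert_self a t))
        (ih (fun b hb => h b (Finset.mem_insert_of_mem hb)))

lemma prod_lX_mem_span_monomials (T : Finset (P1 k)) :
    (∏ A ∈ T, lX k A) ∈
      Submodule.span k {f : R4 | ∃ i j, i + j = T.card ∧ f = X 0 ^ i * X 1 ^ j} := by
  induction T using Finset.induction_on with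
  | empty => exact Submodule.subset_span ⟨0, 0, by simp, by simp⟩
  | @insert a t ha ih =>
      rw [Finset.prod_insert ha, Finset.card_insert_of_notMem ha]
      refine Submodule.span_induction (p := fun x _ =>
        lX k a * x ∈ Submodule.span k
          {f : R4 | ∃ i j, i + j = t.card + 1 ∧ f = X 0 ^ i * X 1 ^ j})
        ?_ ?_ ?_ ?_ ih
      · rintro x ⟨i, j, hij, rfl⟩
        have heq : lX k a * (X 0 ^ i * X 1 ^ j) =
            a.rep 1 • (X 0 ^ (i + 1) * X 1 ^ j) - a.rep 0 • (X 0 ^ i * X 1 ^ (j + 1)) := by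
          rw [lX, MvPolynomial.smul_eq_C_mul, MvPolynomial.smul_eq_C_mul]
          ring
        rw [heq]
        exact Submodule.sub_mem _
          (Submodule.smul_mem _ _ (Submodule.subset_span ⟨i + 1, j, by omega, rfl⟩))
          (Submodule.smul_mem _ _ (Submodule.subset_span ⟨i, j + 1, by omega, rfl⟩))
      · simp
      · intro x y _ _ hx hy
        rw [mul_add]
        exact Submodule.add_mem _ hx hy
      · intro r x _ hx
        rw [mul_smul_comm]
        exact Submodule.smul_mem _ _ hx

lemma lagrange (U : Finset (P1 k)) (hU : U.Nonempty) :
    (Mx k) ^ (U.card - 1) ≤ ∑ A ∈ U, Ideal.span {∏ A' ∈ U.erase A, lX k A'} := by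
  have hu1 : 1 ≤ U.card := Finset.card_pos.mpr hU
  rw [Mx_pow_eq_span, Ideal.span_le]
  rintro x ⟨i, j, hij, rfl⟩
  rw [SetLike.mem_coe]
  set u := U.card with hu
  set prodF : {A // A ∈ U} → R4 := fun A => ∏ A' ∈ U.erase A.1, lX k A' with hprodF
  have hind : LinearIndependent k prodF := by
    rw [Fintype.linearIndependent_iff]
    intro g hg A
    set ev : MvPolynomial (Fin 4) k →+* k :=
      (MvPolynomial.eval (![A.1.rep 0, A.1.rep 1, 0, 0] : Fin 4 → k) :
        MvPolynomial (Fin 4) k →+* k) with hev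
    have hlX : ∀ A' : P1 k,
        ev (lX k A') = A'.rep 1 * A.1.rep 0 - A'.rep 0 * A.1.rep 1 := by
      intro A'
      rw [lX]
      simp [hev]
    have hg' := congrArg ev hg
    rw [map_sum, map_zero] at hg'
    have hterm : ∀ B : {A // A ∈ U},
        ev (g B • prodF B) = g B * ∏ A' ∈ U.erase B.1, ev (lX k A') := by
      intro B
      rw [MvPolynomial.smul_eq_C_mul, map_mul, map_prod]
      simp [hev]
    have hzero : ∀ B : {A // A ∈ U}, B ≠ A → ev (g B • prodF B) = 0 := by
      intro B hBA
      rw [hterm B]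
      have hAmem : A.1 ∈ U.erase B.1 := by
        apply Finset.mem_erase_of_ne_of_mem _ A.2
        intro hEq
        exact hBA (Subtype.ext hEq).symm
      have hz : ev (lX k A.1) = 0 := by rw [hlX]; ring
      rw [Finset.prod_eq_zero hAmem hz, mul_zero]
    have hsum : ∑ B : {A // A ∈ U}, ev (g B • prodF B) = ev (g A • prodF A) :=
      Finset.sum_eq_single_of_mem A (Finset.mem_univ A) (fun B _ hB => hzero B hB)
    have hprodne : (∏ A' ∈ U.erase A.1, ev (lX k A')) ≠ 0 := by
      rw [Finset.prod_ne_zero_iff]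
      intro A' hA'
      rw [hlX]
      exact det_ne_zero_of_ne (Finset.ne_of_mem_erase hA')
    have hfinal : g A * ∏ A' ∈ U.erase A.1, ev (lX k A') = 0 := by
      rw [← hterm A, ← hsum]
      exact hg'
    exact (mul_eq_zero.mp hfinal).resolve_right hprodne
  set monF : Fin u → R4 := fun t => X 0 ^ (t : ℕ) * X 1 ^ (u - 1 - (t : ℕ)) with hmonF
  have hmonFeq : ∀ t : Fin u, monF t =
      (monomial (Finsupp.single 0 (t : ℕ) + Finsupp.single 1 (u - 1 - (t : ℕ))) (1 : k)) := by
    intro t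
    simp only [hmonF]
    rw [X_pow_eq_monomial, X_pow_eq_monomial, monomial_mul, one_mul]
  have hmonInd : LinearIndependent k monF := by
    have hbase := (MvPolynomial.basisMonomials (Fin 4) k).linearIndependent
    have hinj : Function.Injective
        (fun t : Fin u => Finsupp.single (0 : Fin 4) (t : ℕ) +
          Finsupp.single 1 (u - 1 - (t : ℕ))) := by
      intro t s hts
      have h0 := congrArg (fun F : Fin 4 →₀ ℕ => F 0) hts
      simp [Finsupp.add_apply, Finsupp.single_apply] at h0
      exact Fin.ext h0
    have hcomp := hbase.comp _ hinj
    have hfun : monF = (⇑(MvPolynomial.basisMonomials (Fin 4) k)) ∘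
        (fun t : Fin u => Finsupp.single (0 : Fin 4) (t : ℕ) +
          Finsupp.single 1 (u - 1 - (t : ℕ))) := by
      funext t
      simp only [Function.comp_apply, MvPolynomial.coe_basisMonomials]
      exact hmonFeq t
    rw [hfun]
    exact hcomp
  have hWspan : Submodule.span k {f : R4 | ∃ i' j', i' + j' = u - 1 ∧ f = X 0 ^ i' * X 1 ^ j'} =
      Submodule.span k (Set.range monF) := by
    congr 1
    ext f
    constructor
    · rintro ⟨i', j', hij', rfl⟩
      refine ⟨⟨i', by omega⟩, ?_⟩
      have hj' : u - 1 - i' = j' := by omega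
      simp only [hmonF]
      rw [hj']
    · rintro ⟨t, rfl⟩
      exact ⟨(t : ℕ), u - 1 - (t : ℕ), by omega, rfl⟩
  have h1 : Module.finrank k ↥(Submodule.span k (Set.range monF)) = u := by
    rw [finrank_span_eq_card hmonInd, Fintype.card_fin]
  have h2 : Module.finrank k ↥(Submodule.span k (Set.range prodF)) = u := by
    rw [finrank_span_eq_card hind, Fintype.card_coe]
  have hle : Submodule.span k (Set.range prodF) ≤ Submodule.span k (Set.range monF) := by
    rw [Submodule.span_le]
    rintro y ⟨B, rfl⟩
    rw [← hWspan]
    have hmem := prod_lX_mem_span_monomials (k := k) (U.erase B.1)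
    rw [Finset.card_erase_of_mem B.2] at hmem
    exact hmem
  have hFD : FiniteDimensional k ↥(Submodule.span k (Set.range monF)) :=
    FiniteDimensional.span_of_finite k (Set.finite_range _)
  have heq : Submodule.span k (Set.range prodF) = Submodule.span k (Set.range monF) :=
    Submodule.eq_of_le_of_finrank_eq hle (by rw [h1, h2])
  have hxmem : (X 0 ^ i * X 1 ^ j : R4) ∈ Submodule.span k (Set.range prodF) := by
    rw [heq, ← hWspan]
    exact Submodule.subset_span ⟨i, j, hij, rfl⟩
  have hsub : Submodule.span k (Set.range prodF) ≤
      Submodule.restrictScalars k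
        (∑ A ∈ U, Ideal.span {∏ A' ∈ U.erase A, lX k A'} : Ideal R4) := by
    rw [Submodule.span_le]
    rintro y ⟨B, rfl⟩
    rw [SetLike.mem_coe, Submodule.restrictScalars_mem]
    exact ideal_le_sum U _ B.2 (Ideal.subset_span rfl)
  have hx := hsub hxmem
  rwa [Submodule.restrictScalars_mem] at hx

def kill (n : Fin 4) : R4 →ₐ[k] R4 := aeval (fun i => if i = n then 0 else X i)

lemma kill_X_self (n : Fin 4) : kill (k := k) n (X n) = 0 := by simp [kill]

lemma kill_X_ne {n i : Fin 4} (h : i ≠ n) : kill (k := k) n (X i) = X i := by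
  simp [kill, h]

lemma kill_C (n : Fin 4) (r : k) : kill (k := k) n (C r) = C r := by
  simp [kill, algebraMap_eq]

lemma sub_kill_mem (n : Fin 4) (f : R4) : f - kill n f ∈ Ideal.span {(X n : R4)} := by
  induction f using MvPolynomial.induction_on with
  | C a => rw [kill_C]; simp
  | add p q hp hq =>
      have := (Ideal.span {(X n : R4)}).add_mem hp hq
      simpa [map_add, add_sub_add_comm] using this
  | mul_X p m hp =>
      rw [map_mul]
      by_cases hm : m = n
      · subst hm
        rw [kill_X_self, mul_zero, sub_zero]
        exact Ideal.mul_mem_left _ _ (Ideal.subset_span rfl)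
      · rw [kill_X_ne hm]
        have heq : p * X m - kill n p * X m = (p - kill n p) * X m := by ring
        rw [heq]
        exact Ideal.mul_mem_right _ _ hp

lemma exists_kill_decomp (n : Fin 4) (f : R4) : ∃ g : R4, f = kill n f + X n * g := by
  obtain ⟨g, hg⟩ := Ideal.mem_span_singleton.mp (sub_kill_mem n f)
  exact ⟨g, by rw [← hg]; ring⟩

lemma supp_kill (n : Fin 4) (f : R4) : ∀ m ∈ (kill n f).support, m n = 0 := by
  induction f using MvPolynomial.induction_on with
  | C a =>
      intro m hm
      rw [kill_C] at hm
      have := MvPolynomial.mem_support_iff.mp hm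
      rw [MvPolynomial.coeff_C] at this
      by_cases h : m = 0
      · subst h; rfl
      · simp [Ne.symm h] at this
  | add p q hp hq =>
      intro m hm
      rw [map_add] at hm
      rcases Finset.mem_union.mp (MvPolynomial.support_add hm) with hm' | hm'
      · exact hp m hm'
      · exact hq m hm'
  | mul_X p i hp =>
      intro m hm
      rw [map_mul] at hm
      by_cases hi : i = n
      · subst hi
        rw [kill_X_self, mul_zero] at hm
        simp at hm
      · rw [kill_X_ne hi] at hm
        obtain ⟨b, hb, c, hc, hbc⟩ := Finset.mem_add.mp (MvPolynomial.support_mul _ _ hm)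
        rw [MvPolynomial.support_X, Finset.mem_singleton] at hc
        subst hc
        rw [← hbc]
        rw [Finsupp.add_apply, Finsupp.single_apply, if_neg hi]
        rw [add_zero]
        exact hp b hb

lemma kill_mem_Mx_pow {n : Fin 4} (hn0 : (0 : Fin 4) ≠ n) (hn1 : (1 : Fin 4) ≠ n)
    {c : ℕ} {f : R4} (h : f ∈ (Mx k) ^ c) : kill n f ∈ (Mx k) ^ c := by
  have hmem := Ideal.mem_map_of_mem (kill (k := k) n) h
  rw [Ideal.map_pow] at hmem
  have hle : Ideal.map (kill (k := k) n) (Mx k) ≤ Mx k := by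
    have : Ideal.map (kill (k := k) n) (Ideal.span {(X 0 : R4), X 1}) ≤ Mx k := by
      rw [Ideal.map_span, Ideal.span_le]
      rintro x ⟨y, hy, rfl⟩
      simp only [Set.mem_insert_iff, Set.mem_singleton_iff] at hy
      rcases hy with rfl | rfl
      · rw [kill_X_ne hn0]; exact X0_mem_Mx
      · rw [kill_X_ne hn1]; exact X1_mem_Mx
    exact this
  exact pow_le_pow_left' hle c hmem

lemma kill2_lX (A : P1 k) : kill (k := k) 2 (lX k A) = lX k A := by
  rw [lX, map_sub, map_mul, map_mul, kill_C, kill_C, kill_X_ne (by decide), kill_X_ne (by decide)]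

lemma kill3_lX (A : P1 k) : kill (k := k) 3 (lX k A) = lX k A := by
  rw [lX, map_sub, map_mul, map_mul, kill_C, kill_C, kill_X_ne (by decide), kill_X_ne (by decide)]

lemma kill3_span {β : ℕ} (hβ : 1 ≤ β) {A : P1 k} {f : R4}
    (hf : f ∈ Ideal.span {X 3 ^ β, lX k A}) : kill 3 f ∈ Ideal.span {lX k A} := by
  obtain ⟨p, q, hpq⟩ := Ideal.mem_span_pair.mp hf
  rw [← hpq, map_add, map_mul, map_mul, kill3_lX, map_pow, kill_X_self,
    zero_pow (by omega), mul_zero, zero_add]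
  exact Ideal.mul_mem_left _ _ (Ideal.subset_span rfl)

lemma kill2_span {α : ℕ} {A : P1 k} {f : R4}
    (hf : f ∈ Ideal.span {X 2, X 3 ^ α, lX k A}) :
    kill 2 f ∈ Ideal.span {X 3 ^ α, lX k A} := by
  obtain ⟨r, z, hz, hrz⟩ := Ideal.mem_span_insert.mp hf
  obtain ⟨p, q, hpq⟩ := Ideal.mem_span_pair.mp hz
  rw [hrz, ← hpq, map_add, map_mul, kill_X_self, mul_zero, zero_add, map_add,
    map_mul, map_mul, kill2_lX, map_pow, kill_X_ne (by decide)]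
  exact Ideal.add_mem _ (Ideal.mul_mem_left _ _ (Ideal.subset_span (by left; rfl)))
    (Ideal.mul_mem_left _ _ (Ideal.subset_span (by right; rfl)))

lemma peel_g_span {β : ℕ} {A : P1 k} {f g : R4}
    (hf : f ∈ Ideal.span {X 3 ^ β, lX k A}) (hg : f = kill 3 f + X 3 * g) :
    g ∈ Ideal.span {X 3 ^ (β - 1), lX k A} := by
  rcases Nat.eq_zero_or_pos β with hβ0 | hβpos
  · subst hβ0
    have : (1 : R4) ∈ Ideal.span {X 3 ^ (0 - 1), lX k A} := by
      apply Ideal.subset_span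
      left
      simp
    exact Ideal.eq_top_iff_one _ |>.mpr this ▸ Submodule.mem_top
  · obtain ⟨p, q, hpq⟩ := Ideal.mem_span_pair.mp hf
    obtain ⟨q', hq'⟩ := exists_kill_decomp 3 q
    have hkf : kill 3 f = kill 3 q * lX k A := by
      rw [← hpq, map_add, map_mul, map_mul, kill3_lX, map_pow, kill_X_self,
        zero_pow (by omega), mul_zero, zero_add]
    have hpow : (X 3 : R4) ^ β = X 3 ^ (β - 1) * X 3 := by
      rw [← pow_succ]
      congr 1
      omega
    have hX3 : X 3 * (g - (p * X 3 ^ (β - 1) + q' * lX k A)) = 0 := by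
      linear_combination -hg + p * hpow - hpq - hkf + (lX k A) * hq'
    have hzero : g - (p * X 3 ^ (β - 1) + q' * lX k A) = 0 := by
      rcases mul_eq_zero.mp hX3 with h | h
      · exact absurd h (X_ne_zero _)
      · exact h
    have hge : g = p * X 3 ^ (β - 1) + q' * lX k A := by
      have := sub_eq_zero.mp hzero
      exact this
    rw [hge]
    exact Ideal.mem_span_pair.mpr ⟨p, q', rfl⟩

lemma sub_mem_span_mul {I : Ideal R4} {a a' b b' : R4} (ha : a - a' ∈ I) (hb : b - b' ∈ I) :
    a * b - a' * b' ∈ I := by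
  have heq : a * b - a' * b' = (a - a') * b + a' * (b - b') := by ring
  rw [heq]
  exact I.add_mem (I.mul_mem_right _ ha) (I.mul_mem_left _ hb)

lemma prod_lY_cong (s : Finset (P1 k × P1 k)) :
    (∏ P ∈ s, lY k P.2) - C (∏ P ∈ s, (-(P.2.rep 0))) * X 3 ^ s.card
      ∈ Ideal.span {(X 2 : R4)} := by
  induction s using Finset.induction_on with
  | empty => simp
  | @insert P t hP ih =>
      rw [Finset.prod_insert hP, Finset.prod_insert hP, Finset.card_insert_of_notMem hP]
      have h1 : lY k P.2 - C (-(P.2.rep 0)) * X 3 ∈ Ideal.span {(X 2 : R4)} := by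
        have heq : lY k P.2 - C (-(P.2.rep 0)) * X 3 = C (P.2.rep 1) * X 2 := by
          rw [lY, MvPolynomial.C_neg]; ring
        rw [heq]
        exact Ideal.mul_mem_left _ _ (Ideal.subset_span rfl)
      have hmul := sub_mem_span_mul h1 ih
      convert hmul using 1
      rw [C_mul]
      ring

lemma mem_IX_iff {Xs : Finset (P1 k × P1 k)} {f : R4} :
    f ∈ IX k Xs ↔ ∀ P ∈ Xs, f ∈ pointIdeal k P := by
  simp [IX, Ideal.mem_iInf]

lemma lX_mem_pointIdeal (P : P1 k × P1 k) : lX k P.1 ∈ pointIdeal k P :=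
  Ideal.subset_span (by left; rfl)

lemma lY_mem_pointIdeal (P : P1 k × P1 k) : lY k P.2 ∈ pointIdeal k P :=
  Ideal.subset_span (by right; rfl)

lemma mem_pointIdeal_of_dvd_lX {P : P1 k × P1 k} {f : R4} (h : lX k P.1 ∣ f) :
    f ∈ pointIdeal k P := by
  obtain ⟨w, rfl⟩ := h
  exact Ideal.mul_mem_right _ _ (lX_mem_pointIdeal P)

lemma mem_pointIdeal_of_dvd_lY {P : P1 k × P1 k} {f : R4} (h : lY k P.2 ∣ f) :
    f ∈ pointIdeal k P := by
  obtain ⟨w, rfl⟩ := h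
  exact Ideal.mul_mem_right _ _ (lY_mem_pointIdeal P)

lemma step1 (Xs : Finset (P1 k × P1 k)) (h01 : ∀ P ∈ Xs, P.2 ≠ pt01 k)
    (a : ℕ) (ha : (pi1 k Xs).card ≤ a + 1) (d : ℕ) (f0 : R4)
    (hM : f0 ∈ (Mx k) ^ a)
    (hL : ∀ A ∈ pi1 k Xs, d < alphaA k Xs A → f0 ∈ Ideal.span {lX k A}) :
    X 3 ^ d * f0 ∈ (IX k Xs ⊓ (Mx k) ^ a) ⊔ Ideal.span {(X 2 : R4)} := by
  classical
  set T := (pi1 k Xs).filter (fun A => d < alphaA k Xs A) with hT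
  set U := (pi1 k Xs).filter (fun A => ¬ d < alphaA k Xs A) with hU
  have hTU : T.card + U.card = (pi1 k Xs).card :=
    Finset.card_filter_add_card_filter_not _
  set Dd := ∏ A ∈ T, lX k A with hDd
  have hf0Dd : f0 ∈ Ideal.span {Dd} := by
    apply mem_span_prod_lX T f0
    intro A hA
    obtain ⟨hA1, hA2⟩ := Finset.mem_filter.mp hA
    exact hL A hA1 hA2
  obtain ⟨g0, hg0⟩ := Ideal.mem_span_singleton.mp hf0Dd
  by_cases hUe : U = ∅
  · have hTeq : ∀ A ∈ pi1 k Xs, A ∈ T := by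
      intro A hA
      by_contra hAT
      have hAU : A ∈ U := by
        rw [hU, Finset.mem_filter]
        refine ⟨hA, ?_⟩
        intro hd
        exact hAT (Finset.mem_filter.mpr ⟨hA, hd⟩)
      rw [hUe] at hAU
      simp at hAU
    have hDdIX : Dd ∈ IX k Xs := by
      rw [mem_IX_iff]
      intro P hP
      apply mem_pointIdeal_of_dvd_lX
      rw [hDd]
      exact Finset.dvd_prod_of_mem _
        (hTeq P.1 (Finset.mem_image_of_mem Prod.fst hP))
    apply Submodule.mem_sup_left
    rw [Submodule.mem_inf]
    constructor
    · rw [hg0]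
      exact Ideal.mul_mem_left _ _ (Ideal.mul_mem_right _ _ hDdIX)
    · exact Ideal.mul_mem_left _ _ hM
  · have hUne : U.Nonempty := Finset.nonempty_iff_ne_empty.mpr hUe
    have hu1 : 1 ≤ U.card := Finset.card_pos.mpr hUne
    have hδa : T.card ≤ a := by omega
    have hgM : g0 ∈ (Mx k) ^ (a - T.card) := by
      apply divProd_Mx T
      rw [← hg0]
      exact hM
    set c' := a - T.card - (U.card - 1) with hc'
    have hgM2 : g0 ∈ (Mx k) ^ (c' + (U.card - 1)) := by
      have hae : c' + (U.card - 1) = a - T.card := by omega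
      rwa [hae]
    have hg0sum : g0 ∈
        ∑ A ∈ U, (Mx k) ^ c' * Ideal.span {∏ A' ∈ U.erase A, lX k A'} := by
      rw [← Finset.mul_sum]
      rw [pow_add] at hgM2
      exact Ideal.mul_mono_right (lagrange U hUne) hgM2
    set Tgt := (IX k Xs ⊓ (Mx k) ^ a) ⊔ Ideal.span {(X 2 : R4)} with hTgt
    have hsum_le : (∑ A ∈ U, (Mx k) ^ c' * Ideal.span {∏ A' ∈ U.erase A, lX k A'}) ≤
        Submodule.comap (LinearMap.lsmul R4 R4 (X 3 ^ d * Dd)) Tgt := by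
      apply sum_ideal_le
      intro A hAU
      rw [Ideal.mul_le]
      intro r hr s hs
      obtain ⟨t, hts⟩ := Ideal.mem_span_singleton.mp hs
      rw [Submodule.mem_comap, LinearMap.lsmul_apply, smul_eq_mul]
      obtain ⟨hApi1, hαd'⟩ := Finset.mem_filter.mp hAU
      have hαd : alphaA k Xs A ≤ d := by omega
      set FA := Xs.filter (fun P => P.1 = A) with hFA
      have hFAcard : FA.card = alphaA k Xs A := rfl
      set QA := ∏ P ∈ FA, lY k P.2 with hQA
      set cA := ∏ P ∈ FA, (-(P.2.rep 0)) with hcA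
      have hcAne : cA ≠ 0 := by
        rw [hcA, Finset.prod_ne_zero_iff]
        intro P hP
        exact neg_ne_zero.mpr
          (rep0_ne_zero_of_ne_pt01 (h01 P (Finset.mem_filter.mp hP).1))
      set prodA := ∏ A' ∈ U.erase A, lX k A' with hprodA
      set F := C cA⁻¹ * (X 3 ^ (d - alphaA k Xs A) * (QA * (Dd * (prodA * (r * t))))) with hF
      have hFIX : F ∈ IX k Xs := by
        rw [mem_IX_iff]
        intro P hP
        by_cases hP1 : P.1 = A
        · apply mem_pointIdeal_of_dvd_lY
          have h1 : lY k P.2 ∣ QA := by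
            rw [hQA]
            exact Finset.dvd_prod_of_mem _ (Finset.mem_filter.mpr ⟨hP, hP1⟩)
          rw [hF]
          exact ((h1.mul_right _).mul_left _).mul_left _
        · apply mem_pointIdeal_of_dvd_lX
          have hP1pi1 : P.1 ∈ pi1 k Xs := Finset.mem_image_of_mem Prod.fst hP
          by_cases hPT : d < alphaA k Xs P.1
          · have h1 : lX k P.1 ∣ Dd := by
              rw [hDd]
              exact Finset.dvd_prod_of_mem _ (Finset.mem_filter.mpr ⟨hP1pi1, hPT⟩)
            rw [hF]
            exact (((h1.mul_right _).mul_left _).mul_left _).mul_left _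
          · have hPU : P.1 ∈ U.erase A := by
              apply Finset.mem_erase_of_ne_of_mem hP1
              exact Finset.mem_filter.mpr ⟨hP1pi1, hPT⟩
            have h1 : lX k P.1 ∣ prodA := by
              rw [hprodA]
              exact Finset.dvd_prod_of_mem _ hPU
            rw [hF]
            exact ((((h1.mul_right _).mul_left _).mul_left _).mul_left _).mul_left _
      have hFM : F ∈ (Mx k) ^ a := by
        have h1 : r * t ∈ (Mx k) ^ c' := Ideal.mul_mem_right _ _ hr
        have h2 : prodA * (r * t) ∈ (Mx k) ^ ((U.card - 1) + c') := by
          rw [pow_add]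
          apply Ideal.mul_mem_mul _ h1
          have h2' := prod_lX_mem_Mx_pow (k := k) (U.erase A)
          rw [Finset.card_erase_of_mem hAU] at h2'
          exact h2'
        have h3 : Dd * (prodA * (r * t)) ∈ (Mx k) ^ (T.card + ((U.card - 1) + c')) := by
          rw [pow_add]
          exact Ideal.mul_mem_mul (prod_lX_mem_Mx_pow T) h2
        have hae : T.card + ((U.card - 1) + c') = a := by omega
        rw [hae] at h3
        rw [hF]
        exact Ideal.mul_mem_left _ _
          (Ideal.mul_mem_left _ _ (Ideal.mul_mem_left _ _ h3))
      have hQc : QA - C cA * X 3 ^ (alphaA k Xs A) ∈ Ideal.span {(X 2 : R4)} := by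
        have := prod_lY_cong (k := k) FA
        rwa [hFAcard] at this
      have hCinv : C cA⁻¹ * C cA = (1 : R4) := by
        rw [← C_mul, inv_mul_cancel₀ hcAne, C_1]
      have hX3dα : (X 3 : R4) ^ (d - alphaA k Xs A) * X 3 ^ (alphaA k Xs A) = X 3 ^ d := by
        rw [← pow_add]
        congr 1
        omega
      have hdiff : X 3 ^ d * Dd * (r * s) - F =
          (-(C cA⁻¹) * (X 3 ^ (d - alphaA k Xs A) * (Dd * (prodA * (r * t))))) *
            (QA - C cA * X 3 ^ (alphaA k Xs A)) := by
        rw [hF, hts]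
        linear_combination (-(Dd * (prodA * (r * t))) * X 3 ^ d) * hCinv +
          (-(C cA⁻¹ * C cA * (Dd * (prodA * (r * t))))) * hX3dα
      have hsplit : X 3 ^ d * Dd * (r * s) = F + (X 3 ^ d * Dd * (r * s) - F) := by ring
      rw [hsplit]
      apply Submodule.add_mem
      · exact Submodule.mem_sup_left (Submodule.mem_inf.mpr ⟨hFIX, hFM⟩)
      · apply Submodule.mem_sup_right
        rw [hdiff]
        exact Ideal.mul_mem_left _ _ hQc
    have hmem := hsum_le hg0sum
    rw [Submodule.mem_comap, LinearMap.lsmul_apply, smul_eq_mul] at hmem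
    have heq : X 3 ^ d * Dd * g0 = X 3 ^ d * f0 := by rw [hg0]; ring
    rwa [heq] at hmem

lemma supp_g_bound {f g : R4} (hg : f = kill 3 f + X 3 * g) :
    ∀ m ∈ g.support, m 3 + 1 ≤ degreeOf 3 f := by
  intro m hm
  have h0 : coeff (Finsupp.single 3 1 + m) (kill 3 f) = 0 := by
    rw [← MvPolynomial.notMem_support_iff]
    intro hmem
    have hco := supp_kill 3 f _ hmem
    simp [Finsupp.add_apply, Finsupp.single_apply] at hco
  have hco : coeff (Finsupp.single 3 1 + m) f ≠ 0 := by
    rw [hg, MvPolynomial.coeff_add, h0, zero_add, MvPolynomial.coeff_X_mul]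
    exact MvPolynomial.mem_support_iff.mp hm
  have hmemf : (Finsupp.single 3 1 + m) ∈ f.support := MvPolynomial.mem_support_iff.mpr hco
  have hle := Finset.le_sup (f := fun m' : Fin 4 →₀ ℕ => m' 3) hmemf
  rw [← MvPolynomial.degreeOf_eq_sup] at hle
  have he : (Finsupp.single (3 : Fin 4) 1 + m : Fin 4 →₀ ℕ) 3 = m 3 + 1 := by
    rw [Finsupp.add_apply, Finsupp.single_apply, if_pos rfl]
    omega
  exact le_trans (le_of_eq he.symm) hle

lemma peel (Xs : Finset (P1 k × P1 k)) (h01 : ∀ P ∈ Xs, P.2 ≠ pt01 k)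
    (a : ℕ) (ha : (pi1 k Xs).card ≤ a + 1) :
    ∀ (n : ℕ) (d : ℕ) (f : R4), degreeOf 3 f ≤ n → f ∈ (Mx k) ^ a →
      (∀ A ∈ pi1 k Xs, f ∈ Ideal.span {X 3 ^ (alphaA k Xs A - d), lX k A}) →
      X 3 ^ d * f ∈ (IX k Xs ⊓ (Mx k) ^ a) ⊔ Ideal.span {(X 2 : R4)} := by
  intro n
  induction n with
  | zero =>
      intro d f hdeg hMf hspan
      obtain ⟨g, hg⟩ := exists_kill_decomp 3 f
      have hstep := step1 Xs h01 a ha d (kill 3 f)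
        (kill_mem_Mx_pow (by decide) (by decide) hMf)
        (fun A hA hd => kill3_span (by omega) (hspan A hA))
      have hg0 : g = 0 := by
        by_contra hne
        obtain ⟨m, hm⟩ := Finset.nonempty_iff_ne_empty.mpr
          (fun hemp => hne (MvPolynomial.support_eq_empty.mp hemp))
        have := supp_g_bound hg m hm
        omega
      rw [hg, hg0, mul_zero, add_zero]
      exact hstep
  | succ n ih =>
      intro d f hdeg hMf hspan
      obtain ⟨g, hg⟩ := exists_kill_decomp 3 f
      have hstep := step1 Xs h01 a ha d (kill 3 f)
        (kill_mem_Mx_pow (by decide) (by decide) hMf)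
        (fun A hA hd => kill3_span (by omega) (hspan A hA))
      have hX3g : X 3 * g = f - kill 3 f := by linear_combination -hg
      have hMg : g ∈ (Mx k) ^ a := by
        apply divX_Mx (n := 3) (fun m hm => ?_)
        · rw [hX3g]
          exact Submodule.sub_mem _ hMf (kill_mem_Mx_pow (by decide) (by decide) hMf)
        · have h30 : (Finsupp.single (3 : Fin 4) 1 + m : Fin 4 →₀ ℕ) 0 = m 0 := by
            rw [Finsupp.add_apply, Finsupp.single_apply, if_neg (by decide)]
            omega
          have h31 : (Finsupp.single (3 : Fin 4) 1 + m : Fin 4 →₀ ℕ) 1 = m 1 := by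
            rw [Finsupp.add_apply, Finsupp.single_apply, if_neg (by decide)]
            omega
          rw [h30, h31] at hm
          exact hm
      have hspan' : ∀ A ∈ pi1 k Xs,
          g ∈ Ideal.span {X 3 ^ (alphaA k Xs A - (d + 1)), lX k A} := by
        intro A hA
        have hgs := peel_g_span (hspan A hA) hg
        have heq : alphaA k Xs A - d - 1 = alphaA k Xs A - (d + 1) := by omega
        rwa [heq] at hgs
      have hdegg : degreeOf 3 g ≤ n := by
        rw [MvPolynomial.degreeOf_eq_sup]
        apply Finset.sup_le
        intro m hm
        have := supp_g_bound hg m hm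
        omega
      have hih := ih (d + 1) g hdegg hMg hspan'
      have hsplit : X 3 ^ d * f = X 3 ^ d * kill 3 f + X 3 ^ (d + 1) * g := by
        linear_combination (X 3 ^ d : R4) * hg
      rw [hsplit]
      exact Submodule.add_mem _ hstep hih

lemma span_triple_mul_X3 {A : P1 k} {n : ℕ} {h : R4}
    (hh : h ∈ Ideal.span {X 2, X 3 ^ n, lX k A}) :
    X 3 * h ∈ Ideal.span {X 2, X 3 ^ (n + 1), lX k A} := by
  obtain ⟨r, z, hz, hrz⟩ := Ideal.mem_span_insert.mp hh
  obtain ⟨p, q, hpq⟩ := Ideal.mem_span_pair.mp hz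
  rw [hrz, ← hpq]
  have heq : X 3 * (r * X 2 + (p * X 3 ^ n + q * lX k A)) =
      (X 3 * r) * X 2 + (p * X 3 ^ (n + 1) + (X 3 * q) * lX k A) := by ring
  rw [heq]
  exact Ideal.mem_span_insert.mpr
    ⟨X 3 * r, _, Ideal.mem_span_pair.mpr ⟨p, X 3 * q, rfl⟩, rfl⟩

lemma inc1core (A : P1 k) :
    ∀ F : Finset (P1 k × P1 k), (∀ P ∈ F, P.1 = A) →
      (⨅ P ∈ F, pointIdeal k P) ≤ Ideal.span {X 2, X 3 ^ F.card, lX k A} := by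
  intro F
  induction F using Finset.induction_on with
  | empty =>
      intro _
      have h1 : Ideal.span {(X 2 : R4), X 3 ^ (∅ : Finset (P1 k × P1 k)).card, lX k A} = ⊤ := by
        rw [Ideal.eq_top_iff_one]
        apply Ideal.subset_span
        right; left
        simp
      rw [h1]
      exact le_top
  | @insert P0 F' hP0 ih =>
      intro hF
      intro f hf
      rw [Finset.iInf_insert] at hf
      obtain ⟨hfP0, hfF'⟩ := Submodule.mem_inf.mp hf
      have hP01 : P0.1 = A := hF P0 (Finset.mem_insert_self _ _)
      have hfP0' : f ∈ Ideal.span {lX k A, lY k P0.2} := by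
        rw [pointIdeal, hP01] at hfP0
        exact hfP0
      obtain ⟨gg, hh, hghh⟩ := Ideal.mem_span_pair.mp hfP0'
      have hfF'' : ∀ P ∈ F', f ∈ pointIdeal k P := by
        intro P hP
        have hmem : f ∈ ⨅ P ∈ F', pointIdeal k P := hfF'
        simp only [Ideal.mem_iInf] at hmem
        exact hmem P hP
      have hhmem : ∀ P ∈ F', hh ∈ pointIdeal k P := by
        intro P hP
        have hmul : lY k P0.2 * hh ∈ pointIdeal k P := by
          have heq : lY k P0.2 * hh = f - gg * lX k A := by linear_combination hghh
          rw [heq]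
          apply Submodule.sub_mem _ (hfF'' P hP)
          apply Ideal.mul_mem_left
          have hlXeq : lX k A = lX k P.1 := by rw [hF P (Finset.mem_insert_of_mem hP)]
          rw [hlXeq]
          exact lX_mem_pointIdeal P
        apply cancel_lY (B0 := P0.2) ?_ hmul
        intro hEq
        apply hP0
        have hPP : P0 = P := Prod.ext (by rw [hP01, hF P (Finset.mem_insert_of_mem hP)]) hEq
        rwa [hPP]
      have hhspan : hh ∈ Ideal.span {X 2, X 3 ^ F'.card, lX k A} := by
        apply ih (fun P hP => hF P (Finset.mem_insert_of_mem hP))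
        simp only [Ideal.mem_iInf]
        exact hhmem
      rw [Finset.card_insert_of_notMem hP0, ← hghh]
      apply Submodule.add_mem
      · exact Ideal.mul_mem_left _ _ (Ideal.subset_span (by right; right; rfl))
      · have heq : hh * lY k P0.2 =
            (hh * C (P0.2.rep 1)) * X 2 - C (P0.2.rep 0) * (X 3 * hh) := by
          rw [lY]; ring
        rw [heq]
        apply Submodule.sub_mem
        · exact Ideal.mul_mem_left _ _ (Ideal.subset_span (by left; rfl))
        · exact Ideal.mul_mem_left _ _ (span_triple_mul_X3 hhspan)

lemma inc1 (Xs : Finset (P1 k × P1 k)) {A : P1 k} (hA : A ∈ pi1 k Xs) :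
    IX k Xs ≤ Ideal.span {X 2, X 3 ^ (alphaA k Xs A), lX k A} := by
  have hle : IX k Xs ≤ ⨅ P ∈ Xs.filter (fun P => P.1 = A), pointIdeal k P := by
    intro f hf
    simp only [Ideal.mem_iInf]
    intro P hP
    exact mem_IX_iff.mp hf P (Finset.filter_subset _ _ hP)
  refine le_trans hle ?_
  exact inc1core A (Xs.filter (fun P => P.1 = A)) (fun P hP => (Finset.mem_filter.mp hP).2)

theorem stmt12work (Xs : Finset (P1 k × P1 k))
    (h01 : ∀ P ∈ Xs, P.2 ≠ pt01 k) (a : ℕ) (ha : (pi1 k Xs).card ≤ a + 1) :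
    (IX k Xs ⊓ (Mx k) ^ a) ⊔ Ideal.span {X 2} =
      (⨅ A ∈ pi1 k Xs, Ideal.span {X 2, X 3 ^ (alphaA k Xs A), lX k A}) ⊓
        ((Mx k) ^ a ⊔ Ideal.span {X 2}) := by
  apply le_antisymm
  · apply sup_le
    · apply le_inf
      · exact le_iInf fun A => le_iInf fun hA => le_trans inf_le_left (inc1 Xs hA)
      · exact le_trans inf_le_right le_sup_left
    · apply le_inf
      · refine le_iInf fun A => le_iInf fun hA => ?_
        rw [Ideal.span_le]
        rintro x rfl
        exact Ideal.subset_span (by left; rfl)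
      · exact le_sup_right
  · intro f hf
    obtain ⟨hf1, hf2⟩ := Submodule.mem_inf.mp hf
    have hf1' : ∀ A ∈ pi1 k Xs, f ∈ Ideal.span {X 2, X 3 ^ (alphaA k Xs A), lX k A} := by
      simpa only [Ideal.mem_iInf] using hf1
    have hsub2 := sub_kill_mem 2 f
    have hk2span : ∀ A ∈ pi1 k Xs, kill 2 f ∈ Ideal.span {X 3 ^ (alphaA k Xs A), lX k A} :=
      fun A hA => kill2_span (hf1' A hA)
    have hk2M : kill 2 f ∈ (Mx k) ^ a := by
      rw [Submodule.mem_sup] at hf2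
      obtain ⟨y, hy, z, hz, hyz⟩ := hf2
      obtain ⟨w, hw⟩ := Ideal.mem_span_singleton.mp hz
      have hkz : kill (k := k) 2 z = 0 := by rw [hw, map_mul, kill_X_self, zero_mul]
      have hkf : kill 2 f = kill 2 y := by rw [← hyz, map_add, hkz, add_zero]
      rw [hkf]
      exact kill_mem_Mx_pow (by decide) (by decide) hy
    have hpeel := peel Xs h01 a ha (degreeOf 3 (kill 2 f)) 0 (kill 2 f) le_rfl hk2M
      (fun A hA => by simpa using hk2span A hA)
    rw [pow_zero, one_mul] at hpeel
    have hsplit : f = (f - kill 2 f) + kill 2 f := by ring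
    rw [hsplit]
    exact Submodule.add_mem _ (Submodule.mem_sup_right hsub2) hpeel

end Stmt12Aux

/-- if no point of `X` has second coordinate `[0:1]`, then for every
`a ≥ |π₁(X)| − 1`, `⟨I_X ∩ ⟨x₀,x₁⟩ᵃ, y₀⟩ = ⋂_{A ∈ π₁(X)} ⟨y₀, y₁^{α_A}, L_A⟩ ∩ ⟨⟨x₀,x₁⟩ᵃ, y₀⟩`. -/


theorem stmt12 [CharZero k] (Xs : Finset (P1 k × P1 k))
    (h01 : ∀ P ∈ Xs, P.2 ≠ pt01 k) (a : ℕ) (ha : (pi1 k Xs).card ≤ a + 1) :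
    (IX k Xs ⊓ (Mx k) ^ a) ⊔ Ideal.span {X 2} =
      (⨅ A ∈ pi1 k Xs, Ideal.span {X 2, X 3 ^ (alphaA k Xs A), lX k A}) ⊓
        ((Mx k) ^ a ⊔ Ideal.span {X 2}) := by
  exact Stmt12Aux.stmt12work (k := k) Xs h01 a ha

end
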